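/- Let 𝒞 be a category with finite limits and binary coproducts such that both 𝒞 and 𝒞^op are majority categories. Then for every object A there exists a morphism p_A : A × A × A → A such that: (i) for every object S and all morphisms a, b : S → A, p_A ∘ ⟨a, a, b⟩ = a, p_A ∘ ⟨a, b, a⟩ = a, and p_A ∘ ⟨b, a, a⟩ = a (p_A is an internal majority operation); and (ii) every morphism f : A → B of 𝒞 is a homomorphism for these operations: f ∘ p_A = p_B ∘ (f × f × f). Consequently each hom-set hom(S, A) carries a commutative majority operation given by (a, b, c) ↦ p_A ∘ ⟨a, b, c⟩. -/

import Mathlib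

open CategoryTheory CategoryTheory.Limits

/-- The triple of morphisms `(a, b, c)` is related by the ternary relation
`(r₁, r₂, r₃)`. -/
def TernaryRelated {C : Type*} [Category C] {R A B D S : C}
    (r₁ : R ⟶ A) (r₂ : R ⟶ B) (r₃ : R ⟶ D) (a : S ⟶ A) (b : S ⟶ B) (c : S ⟶ D) : Prop :=
  ∃ f : S ⟶ R, f ≫ r₁ = a ∧ f ≫ r₂ = b ∧ f ≫ r₃ = c

/-- A category is a majority category when every (jointly monomorphic) internal ternary
relation is strictly closed with respect to the majority matrix. -/
def IsMajorityCategory (C : Type*) [Category C] : Prop :=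
  ∀ ⦃A B D R : C⦄ (r₁ : R ⟶ A) (r₂ : R ⟶ B) (r₃ : R ⟶ D),
    (∀ ⦃S : C⦄ (f g : S ⟶ R),
      f ≫ r₁ = g ≫ r₁ → f ≫ r₂ = g ≫ r₂ → f ≫ r₃ = g ≫ r₃ → f = g) →
    ∀ ⦃S : C⦄ (a₁ a₂ : S ⟶ A) (b₁ b₂ : S ⟶ B) (c₁ c₂ : S ⟶ D),
      TernaryRelated r₁ r₂ r₃ a₁ b₁ c₂ →
      TernaryRelated r₁ r₂ r₃ a₁ b₂ c₁ →
      TernaryRelated r₁ r₂ r₃ a₂ b₁ c₁ →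
      TernaryRelated r₁ r₂ r₃ a₁ b₁ c₁

attribute [local simp] prod.lift_fst prod.lift_snd prod.lift_fst_assoc prod.lift_snd_assoc

section MajorityAux

variable {C : Type*} [Category C]

/-- Generalized majority rule: if `(p₁, p₂, p₃)` is a jointly monomorphic frame
on `W`, and parallel morphisms `g h : W ⟶ T` agree on `s₁, s₂, s₃` matching the
majority pattern relative to `s₀`, then `g, h` agree on `s₀`.
Proved by applying the majority condition to the equalizer of `g` and `h`. -/
lemma maj_gen [HasEqualizers C] (hmaj : IsMajorityCategory C)
    {W T X Y Z : C} (g h : W ⟶ T) (p₁ : W ⟶ X) (p₂ : W ⟶ Y) (p₃ : W ⟶ Z)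
    (hjm : ∀ ⦃S : C⦄ (f f' : S ⟶ W),
      f ≫ p₁ = f' ≫ p₁ → f ≫ p₂ = f' ≫ p₂ → f ≫ p₃ = f' ≫ p₃ → f = f')
    {S : C} (s₀ s₁ s₂ s₃ : S ⟶ W)
    (h₁₁ : s₁ ≫ p₁ = s₀ ≫ p₁) (h₁₂ : s₁ ≫ p₂ = s₀ ≫ p₂)
    (h₂₁ : s₂ ≫ p₁ = s₀ ≫ p₁) (h₂₃ : s₂ ≫ p₃ = s₀ ≫ p₃)
    (h₃₂ : s₃ ≫ p₂ = s₀ ≫ p₂) (h₃₃ : s₃ ≫ p₃ = s₀ ≫ p₃)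
    (e₁ : s₁ ≫ g = s₁ ≫ h) (e₂ : s₂ ≫ g = s₂ ≫ h) (e₃ : s₃ ≫ g = s₃ ≫ h) :
    s₀ ≫ g = s₀ ≫ h := by
  have hjm' : ∀ ⦃S' : C⦄ (f f' : S' ⟶ equalizer g h),
      f ≫ (equalizer.ι g h ≫ p₁) = f' ≫ (equalizer.ι g h ≫ p₁) →
      f ≫ (equalizer.ι g h ≫ p₂) = f' ≫ (equalizer.ι g h ≫ p₂) →
      f ≫ (equalizer.ι g h ≫ p₃) = f' ≫ (equalizer.ι g h ≫ p₃) → f = f' := by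
    intro S' f f' u1 u2 u3
    have : f ≫ equalizer.ι g h = f' ≫ equalizer.ι g h := by
      refine hjm _ _ ?_ ?_ ?_ <;> simp only [Category.assoc]
      exacts [u1, u2, u3]
    exact (cancel_mono (equalizer.ι g h)).mp this
  have rel1 : TernaryRelated (equalizer.ι g h ≫ p₁) (equalizer.ι g h ≫ p₂)
      (equalizer.ι g h ≫ p₃) (s₀ ≫ p₁) (s₀ ≫ p₂) (s₁ ≫ p₃) := by
    refine ⟨equalizer.lift s₁ e₁, ?_, ?_, ?_⟩ <;>
      rw [← Category.assoc, equalizer.lift_ι]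
    exacts [h₁₁, h₁₂]
  have rel2 : TernaryRelated (equalizer.ι g h ≫ p₁) (equalizer.ι g h ≫ p₂)
      (equalizer.ι g h ≫ p₃) (s₀ ≫ p₁) (s₂ ≫ p₂) (s₀ ≫ p₃) := by
    refine ⟨equalizer.lift s₂ e₂, ?_, ?_, ?_⟩ <;>
      rw [← Category.assoc, equalizer.lift_ι]
    exacts [h₂₁, h₂₃]
  have rel3 : TernaryRelated (equalizer.ι g h ≫ p₁) (equalizer.ι g h ≫ p₂)
      (equalizer.ι g h ≫ p₃) (s₃ ≫ p₁) (s₀ ≫ p₂) (s₀ ≫ p₃) := by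
    refine ⟨equalizer.lift s₃ e₃, ?_, ?_, ?_⟩ <;>
      rw [← Category.assoc, equalizer.lift_ι]
    exacts [h₃₂, h₃₃]
  obtain ⟨f, hf1, hf2, hf3⟩ :=
    hmaj (equalizer.ι g h ≫ p₁) (equalizer.ι g h ≫ p₂) (equalizer.ι g h ≫ p₃) hjm'
      (s₀ ≫ p₁) (s₃ ≫ p₁) (s₀ ≫ p₂) (s₂ ≫ p₂) (s₀ ≫ p₃) (s₁ ≫ p₃)
      rel1 rel2 rel3
  have hfι : f ≫ equalizer.ι g h = s₀ := by
    refine hjm _ _ ?_ ?_ ?_ <;> simp only [Category.assoc]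
    exacts [hf1, hf2, hf3]
  calc s₀ ≫ g = f ≫ equalizer.ι g h ≫ g := by rw [← Category.assoc, hfι]
    _ = f ≫ equalizer.ι g h ≫ h := by rw [equalizer.condition]
    _ = s₀ ≫ h := by rw [← Category.assoc, hfι]

/-- Dual generalized majority rule, extracted from `Cᵒᵖ` being a majority category:
if `(p₁, p₂, p₃)` is a jointly epimorphic cospan into `W` and the morphisms
`s₁, s₂, s₃ : W ⟶ S` witness the majority pattern for targets `(a, b, c)`, then
there is `f : W ⟶ S` with `p₁ ≫ f = a`, `p₂ ≫ f = b`, `p₃ ≫ f = c`. -/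
lemma comaj_gen (hcomaj : IsMajorityCategory Cᵒᵖ)
    {W X Y Z : C} (p₁ : X ⟶ W) (p₂ : Y ⟶ W) (p₃ : Z ⟶ W)
    (hje : ∀ ⦃S : C⦄ (f f' : W ⟶ S),
      p₁ ≫ f = p₁ ≫ f' → p₂ ≫ f = p₂ ≫ f' → p₃ ≫ f = p₃ ≫ f' → f = f')
    {S : C} (a : X ⟶ S) (b : Y ⟶ S) (c : Z ⟶ S) (s₁ s₂ s₃ : W ⟶ S)
    (h₁₁ : p₁ ≫ s₁ = a) (h₁₂ : p₂ ≫ s₁ = b)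
    (h₂₁ : p₁ ≫ s₂ = a) (h₂₃ : p₃ ≫ s₂ = c)
    (h₃₂ : p₂ ≫ s₃ = b) (h₃₃ : p₃ ≫ s₃ = c) :
    ∃ f : W ⟶ S, p₁ ≫ f = a ∧ p₂ ≫ f = b ∧ p₃ ≫ f = c := by
  have jm : ∀ ⦃S' : Cᵒᵖ⦄ (f f' : S' ⟶ Opposite.op W),
      f ≫ p₁.op = f' ≫ p₁.op → f ≫ p₂.op = f' ≫ p₂.op →
      f ≫ p₃.op = f' ≫ p₃.op → f = f' := by
    intro S' f f' u1 u2 u3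
    refine Quiver.Hom.unop_inj (hje _ _ ?_ ?_ ?_)
    · exact congrArg Quiver.Hom.unop u1
    · exact congrArg Quiver.Hom.unop u2
    · exact congrArg Quiver.Hom.unop u3
  have rel1 : TernaryRelated p₁.op p₂.op p₃.op a.op b.op (p₃ ≫ s₁).op :=
    ⟨s₁.op, by rw [← op_comp, h₁₁], by rw [← op_comp, h₁₂], by rw [← op_comp]⟩
  have rel2 : TernaryRelated p₁.op p₂.op p₃.op a.op (p₂ ≫ s₂).op c.op :=
    ⟨s₂.op, by rw [← op_comp, h₂₁], by rw [← op_comp], by rw [← op_comp, h₂₃]⟩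
  have rel3 : TernaryRelated p₁.op p₂.op p₃.op (p₁ ≫ s₃).op b.op c.op :=
    ⟨s₃.op, by rw [← op_comp], by rw [← op_comp, h₃₂], by rw [← op_comp, h₃₃]⟩
  obtain ⟨F, hF1, hF2, hF3⟩ :=
    hcomaj p₁.op p₂.op p₃.op jm a.op ((p₁ ≫ s₃).op) b.op ((p₂ ≫ s₂).op)
      c.op ((p₃ ≫ s₁).op) rel1 rel2 rel3
  refine ⟨F.unop, ?_, ?_, ?_⟩
  · have := congrArg Quiver.Hom.unop hF1; simpa using this
  · have := congrArg Quiver.Hom.unop hF2; simpa using this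
  · have := congrArg Quiver.Hom.unop hF3; simpa using this

variable [HasFiniteLimits C]

/-- The first canonical map `A × A ⟶ A × (A × A)`, `(x, y) ↦ (x, x, y)`. -/
noncomputable abbrev majM₁ (A : C) : A ⨯ A ⟶ A ⨯ (A ⨯ A) :=
  prod.lift prod.fst (prod.lift prod.fst prod.snd)

/-- The second canonical map, `(x, y) ↦ (x, y, x)`. -/
noncomputable abbrev majM₂ (A : C) : A ⨯ A ⟶ A ⨯ (A ⨯ A) :=
  prod.lift prod.fst (prod.lift prod.snd prod.fst)

/-- The third canonical map, `(x, y) ↦ (y, x, x)`. -/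
noncomputable abbrev majM₃ (A : C) : A ⨯ A ⟶ A ⨯ (A ⨯ A) :=
  prod.lift prod.snd (prod.lift prod.fst prod.fst)

/-- In a majority category, the cospan `(majM₁, majM₂, majM₃)` is jointly epimorphic. -/
lemma m_jointly_epi (hmaj : IsMajorityCategory C) {A T : C}
    (g h : (A ⨯ (A ⨯ A)) ⟶ T)
    (e₁ : majM₁ A ≫ g = majM₁ A ≫ h)
    (e₂ : majM₂ A ≫ g = majM₂ A ≫ h)
    (e₃ : majM₃ A ≫ g = majM₃ A ≫ h) : g = h := by
  have hjm : ∀ ⦃S : C⦄ (f f' : S ⟶ A ⨯ (A ⨯ A)),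
      f ≫ (prod.fst : A ⨯ (A ⨯ A) ⟶ A) = f' ≫ prod.fst →
      f ≫ (prod.snd ≫ prod.fst) = f' ≫ (prod.snd ≫ prod.fst) →
      f ≫ (prod.snd ≫ prod.snd) = f' ≫ (prod.snd ≫ prod.snd) → f = f' := by
    intro S f f' u1 u2 u3
    refine prod.hom_ext u1 (prod.hom_ext ?_ ?_)
    · simpa using u2
    · simpa using u3
  have key := maj_gen hmaj g h
    (prod.fst : A ⨯ (A ⨯ A) ⟶ A) (prod.snd ≫ prod.fst) (prod.snd ≫ prod.snd) hjm
    (𝟙 _)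
    (prod.lift prod.fst (prod.snd ≫ prod.fst) ≫ majM₂ A)
    (prod.lift prod.fst (prod.snd ≫ prod.snd) ≫ majM₁ A)
    (prod.lift (prod.snd ≫ prod.fst) (prod.snd ≫ prod.snd) ≫ majM₁ A)
    (by simp) (by simp) (by simp) (by simp) (by simp) (by simp)
    (by simp only [Category.assoc, e₂]) (by simp only [Category.assoc, e₁])
    (by simp only [Category.assoc, e₁])
  simpa using key

/-- Existence of the internal majority operation. -/
lemma internal_majority_exists (hmaj : IsMajorityCategory C)
    (hcomaj : IsMajorityCategory Cᵒᵖ) (A : C) :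
    ∃ p : (A ⨯ (A ⨯ A)) ⟶ A,
      majM₁ A ≫ p = prod.fst ∧ majM₂ A ≫ p = prod.fst ∧ majM₃ A ≫ p = prod.fst := by
  refine comaj_gen hcomaj (majM₁ A) (majM₂ A) (majM₃ A)
    (fun S f f' u1 u2 u3 => m_jointly_epi hmaj f f' u1 u2 u3)
    prod.fst prod.fst prod.fst
    (prod.fst) (prod.snd ≫ prod.fst) (prod.snd ≫ prod.snd)
    (by simp) (by simp) (by simp) (by simp) (by simp) (by simp)

end MajorityAux

/-- If `C` has finite limits and binary coproducts and both `C` and `Cᵒᵖ` are majority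
categories, then every object `A` carries an internal majority operation
`p_A : A ⨯ A ⨯ A ⟶ A`, every morphism is a homomorphism for these operations, and
consequently every hom-set carries a commutative majority operation
`(a, b, c) ↦ ⟨a, b, c⟩ ≫ p_A`. -/
theorem internal_commutative_majority_operations {C : Type*} [Category C]
    [HasFiniteLimits C] [HasBinaryCoproducts C]
    (hmaj : IsMajorityCategory C) (hcomaj : IsMajorityCategory Cᵒᵖ) :
    ∃ p : ∀ A : C, (A ⨯ (A ⨯ A)) ⟶ A,
      -- (i) each `p A` is an internal majority operation:
      (∀ (A : C) ⦃S : C⦄ (a b : S ⟶ A),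
        prod.lift a (prod.lift a b) ≫ p A = a ∧
        prod.lift a (prod.lift b a) ≫ p A = a ∧
        prod.lift b (prod.lift a a) ≫ p A = a) ∧
      -- (ii) every morphism of `C` is a homomorphism of internal majority algebras:
      (∀ ⦃A B : C⦄ (f : A ⟶ B), p A ≫ f = prod.map f (prod.map f f) ≫ p B) ∧
      -- consequently, the induced majority operation on each hom-set is commutative:
      (∀ (A : C) ⦃S : C⦄ (a₁ a₂ a₃ b₁ b₂ b₃ c₁ c₂ c₃ : S ⟶ A),
        prod.lift (prod.lift a₁ (prod.lift a₂ a₃) ≫ p A)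
          (prod.lift (prod.lift b₁ (prod.lift b₂ b₃) ≫ p A)
            (prod.lift c₁ (prod.lift c₂ c₃) ≫ p A)) ≫ p A
        = prod.lift (prod.lift a₁ (prod.lift b₁ c₁) ≫ p A)
            (prod.lift (prod.lift a₂ (prod.lift b₂ c₂) ≫ p A)
              (prod.lift a₃ (prod.lift b₃ c₃) ≫ p A)) ≫ p A) := by
  classical
  choose p hp₁ hp₂ hp₃ using fun A : C => internal_majority_exists hmaj hcomaj A
  -- (i) the internal majority identities, in elementwise form
  have Hi : ∀ (A : C) ⦃S : C⦄ (a b : S ⟶ A),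
      prod.lift a (prod.lift a b) ≫ p A = a ∧
      prod.lift a (prod.lift b a) ≫ p A = a ∧
      prod.lift b (prod.lift a a) ≫ p A = a := by
    intro A S a b
    refine ⟨?_, ?_, ?_⟩
    · have h : prod.lift a (prod.lift a b) = prod.lift a b ≫ majM₁ A := by simp
      rw [h, Category.assoc, hp₁ A, prod.lift_fst]
    · have h : prod.lift a (prod.lift b a) = prod.lift a b ≫ majM₂ A := by simp
      rw [h, Category.assoc, hp₂ A, prod.lift_fst]
    · have h : prod.lift b (prod.lift a a) = prod.lift a b ≫ majM₃ A := by simp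
      rw [h, Category.assoc, hp₃ A, prod.lift_fst]
  -- (ii) naturality
  have Hii : ∀ ⦃A B : C⦄ (f : A ⟶ B), p A ≫ f = prod.map f (prod.map f f) ≫ p B := by
    intro A B f
    refine m_jointly_epi hmaj _ _ ?_ ?_ ?_
    · rw [← Category.assoc, hp₁ A]
      have h : majM₁ A ≫ prod.map f (prod.map f f) = prod.map f f ≫ majM₁ B := by simp
      rw [← Category.assoc, h, Category.assoc, hp₁ B, prod.map_fst]
    · rw [← Category.assoc, hp₂ A]
      have h : majM₂ A ≫ prod.map f (prod.map f f) = prod.map f f ≫ majM₂ B := by simp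
      rw [← Category.assoc, h, Category.assoc, hp₂ B, prod.map_fst]
    · rw [← Category.assoc, hp₃ A]
      have h : majM₃ A ≫ prod.map f (prod.map f f) = prod.map f f ≫ majM₃ B := by simp
      rw [← Category.assoc, h, Category.assoc, hp₃ B, prod.map_fst]
  refine ⟨p, Hi, Hii, ?_⟩
  -- (iii) interchange / commutativity
  intro A S a₁ a₂ a₃ b₁ b₂ b₃ c₁ c₂ c₃
  -- abbreviations
  let A3 : C := A ⨯ (A ⨯ A)
  let F : A3 ⨯ (A3 ⨯ A3) ⟶ A3 := prod.fst
  let G1 : A3 ⨯ (A3 ⨯ A3) ⟶ A3 := prod.snd ≫ prod.fst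
  let G2 : A3 ⨯ (A3 ⨯ A3) ⟶ A3 := prod.snd ≫ prod.snd
  let Q1 : A3 ⟶ A := prod.fst
  let Q2 : A3 ⟶ A := prod.snd ≫ prod.fst
  let Q3 : A3 ⟶ A := prod.snd ≫ prod.snd
  -- the transposed projections
  let T₁ : A3 ⨯ (A3 ⨯ A3) ⟶ A3 := prod.lift (F ≫ Q1) (prod.lift (G1 ≫ Q1) (G2 ≫ Q1))
  let T₂ : A3 ⨯ (A3 ⨯ A3) ⟶ A3 := prod.lift (F ≫ Q2) (prod.lift (G1 ≫ Q2) (G2 ≫ Q2))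
  let T₃ : A3 ⨯ (A3 ⨯ A3) ⟶ A3 := prod.lift (F ≫ Q3) (prod.lift (G1 ≫ Q3) (G2 ≫ Q3))
  let u : A3 ⨯ (A3 ⨯ A3) ⟶ A3 :=
    prod.lift (T₁ ≫ p A) (prod.lift (T₂ ≫ p A) (T₃ ≫ p A))
  -- componentwise computations of `majMᵢ A3 ≫ Tⱼ`
  let FF : A3 ⨯ A3 ⟶ A3 := prod.fst
  let GG : A3 ⨯ A3 ⟶ A3 := prod.snd
  have E1 : ∀ Q : A3 ⟶ A, majM₁ A3 ≫ prod.lift (F ≫ Q) (prod.lift (G1 ≫ Q) (G2 ≫ Q)) =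
      prod.lift (FF ≫ Q) (prod.lift (FF ≫ Q) (GG ≫ Q)) := by
    intro Q
    refine prod.hom_ext ?_ (prod.hom_ext ?_ ?_) <;>
      simp [F, G1, G2, FF, GG, Category.assoc]
  have E2 : ∀ Q : A3 ⟶ A, majM₂ A3 ≫ prod.lift (F ≫ Q) (prod.lift (G1 ≫ Q) (G2 ≫ Q)) =
      prod.lift (FF ≫ Q) (prod.lift (GG ≫ Q) (FF ≫ Q)) := by
    intro Q
    refine prod.hom_ext ?_ (prod.hom_ext ?_ ?_) <;>
      simp [F, G1, G2, FF, GG, Category.assoc]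
  have E3 : ∀ Q : A3 ⟶ A, majM₃ A3 ≫ prod.lift (F ≫ Q) (prod.lift (G1 ≫ Q) (G2 ≫ Q)) =
      prod.lift (GG ≫ Q) (prod.lift (FF ≫ Q) (FF ≫ Q)) := by
    intro Q
    refine prod.hom_ext ?_ (prod.hom_ext ?_ ?_) <;>
      simp [F, G1, G2, FF, GG, Category.assoc]
  -- `u` is an internal majority operation on `A3`, hence equals `p A3`.
  have hQ123 : prod.lift (FF ≫ Q1) (prod.lift (FF ≫ Q2) (FF ≫ Q3)) = FF := by
    refine prod.hom_ext ?_ (prod.hom_ext ?_ ?_) <;>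
      simp [FF, Q1, Q2, Q3, Category.assoc]
  have hu₁ : majM₁ A3 ≫ u = prod.fst := by
    show majM₁ A3 ≫ u = FF
    rw [show u = prod.lift (T₁ ≫ p A) (prod.lift (T₂ ≫ p A) (T₃ ≫ p A)) from rfl,
      prod.comp_lift, prod.comp_lift]
    simp only [← Category.assoc]
    rw [show majM₁ A3 ≫ T₁ = _ from E1 Q1, show majM₁ A3 ≫ T₂ = _ from E1 Q2,
      show majM₁ A3 ≫ T₃ = _ from E1 Q3,
      (Hi A (FF ≫ Q1) (GG ≫ Q1)).1, (Hi A (FF ≫ Q2) (GG ≫ Q2)).1,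
      (Hi A (FF ≫ Q3) (GG ≫ Q3)).1, hQ123]
  have hu₂ : majM₂ A3 ≫ u = prod.fst := by
    show majM₂ A3 ≫ u = FF
    rw [show u = prod.lift (T₁ ≫ p A) (prod.lift (T₂ ≫ p A) (T₃ ≫ p A)) from rfl,
      prod.comp_lift, prod.comp_lift]
    simp only [← Category.assoc]
    rw [show majM₂ A3 ≫ T₁ = _ from E2 Q1, show majM₂ A3 ≫ T₂ = _ from E2 Q2,
      show majM₂ A3 ≫ T₃ = _ from E2 Q3,
      (Hi A (FF ≫ Q1) (GG ≫ Q1)).2.1, (Hi A (FF ≫ Q2) (GG ≫ Q2)).2.1,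
      (Hi A (FF ≫ Q3) (GG ≫ Q3)).2.1, hQ123]
  have hu₃ : majM₃ A3 ≫ u = prod.fst := by
    show majM₃ A3 ≫ u = FF
    rw [show u = prod.lift (T₁ ≫ p A) (prod.lift (T₂ ≫ p A) (T₃ ≫ p A)) from rfl,
      prod.comp_lift, prod.comp_lift]
    simp only [← Category.assoc]
    rw [show majM₃ A3 ≫ T₁ = _ from E3 Q1, show majM₃ A3 ≫ T₂ = _ from E3 Q2,
      show majM₃ A3 ≫ T₃ = _ from E3 Q3,
      (Hi A (FF ≫ Q1) (GG ≫ Q1)).2.2, (Hi A (FF ≫ Q2) (GG ≫ Q2)).2.2,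
      (Hi A (FF ≫ Q3) (GG ≫ Q3)).2.2, hQ123]
  have hup : u = p A3 := by
    refine m_jointly_epi hmaj _ _ ?_ ?_ ?_
    · rw [hu₁, hp₁ A3]
    · rw [hu₂, hp₂ A3]
    · rw [hu₃, hp₃ A3]
  -- naturality of `p` at `p A` itself
  have hnat : p A3 ≫ p A = prod.map (p A) (prod.map (p A) (p A)) ≫ p A := Hii (p A)
  -- specialize along the 9-tuple
  let Φ : S ⟶ A3 ⨯ (A3 ⨯ A3) :=
    prod.lift (prod.lift a₁ (prod.lift a₂ a₃))
      (prod.lift (prod.lift b₁ (prod.lift b₂ b₃)) (prod.lift c₁ (prod.lift c₂ c₃)))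
  have key := congrArg (fun k => Φ ≫ k) hnat
  simp only [← Category.assoc] at key
  have hΦT₁ : Φ ≫ T₁ = prod.lift a₁ (prod.lift b₁ c₁) := by
    refine prod.hom_ext ?_ (prod.hom_ext ?_ ?_) <;>
      simp [Φ, T₁, F, G1, G2, Q1, Category.assoc]
  have hΦT₂ : Φ ≫ T₂ = prod.lift a₂ (prod.lift b₂ c₂) := by
    refine prod.hom_ext ?_ (prod.hom_ext ?_ ?_) <;>
      simp [Φ, T₂, F, G1, G2, Q2, Category.assoc]
  have hΦT₃ : Φ ≫ T₃ = prod.lift a₃ (prod.lift b₃ c₃) := by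
    refine prod.hom_ext ?_ (prod.hom_ext ?_ ?_) <;>
      simp [Φ, T₃, F, G1, G2, Q3, Category.assoc]
  have hΦu : Φ ≫ p A3 = prod.lift (prod.lift a₁ (prod.lift b₁ c₁) ≫ p A)
      (prod.lift (prod.lift a₂ (prod.lift b₂ c₂) ≫ p A)
        (prod.lift a₃ (prod.lift b₃ c₃) ≫ p A)) := by
    rw [← hup,
      show u = prod.lift (T₁ ≫ p A) (prod.lift (T₂ ≫ p A) (T₃ ≫ p A)) from rfl,
      prod.comp_lift, prod.comp_lift]
    simp only [← Category.assoc]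
    rw [hΦT₁, hΦT₂, hΦT₃]
  have hΦm : Φ ≫ prod.map (p A) (prod.map (p A) (p A)) =
      prod.lift (prod.lift a₁ (prod.lift a₂ a₃) ≫ p A)
        (prod.lift (prod.lift b₁ (prod.lift b₂ b₃) ≫ p A)
          (prod.lift c₁ (prod.lift c₂ c₃) ≫ p A)) := by
    rw [show Φ = prod.lift (prod.lift a₁ (prod.lift a₂ a₃))
      (prod.lift (prod.lift b₁ (prod.lift b₂ b₃)) (prod.lift c₁ (prod.lift c₂ c₃)))
      from rfl, prod.lift_map, prod.lift_map]
  rw [hΦu, hΦm] at key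
  exact key.symm
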